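/- Let μ be a centrally-symmetric finite Borel measure on ℝⁿ (i.e., μ(A) = μ(−A) for all Borel A) with finite first moment, μ(ℝⁿ) ≤ 2 and μ({0}) ≥ 1. Then for every unit vector θ, the support function of the metronoid satisfies h_{M(μ)}(θ) = ½ ∫ |⟨x,θ⟩| dμ(x). -/

import Mathlib

open MeasureTheory

noncomputable def metronoid {n : ℕ} (μ : Measure (EuclideanSpace ℝ (Fin n))) :
    Set (EuclideanSpace ℝ (Fin n)) :=
  {y | ∃ f : EuclideanSpace ℝ (Fin n) → ℝ, Measurable f ∧
    (∀ x, f x ∈ Set.Icc (0:ℝ) 1) ∧ (∫ x, f x ∂μ) = 1 ∧ (∫ x, f x • x ∂μ) = y}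

theorem support_metronoid_symmetric {n : ℕ}
    (μ : Measure (EuclideanSpace ℝ (Fin n))) [IsFiniteMeasure μ]
    (hmom : Integrable (fun x => ‖x‖) μ)
    (hsymm : μ.map (fun x => -x) = μ)
    (hmass : μ Set.univ ≤ 2) (hatom : 1 ≤ μ {0})
    (θ : EuclideanSpace ℝ (Fin n)) (hθ : ‖θ‖ = 1) :
    sSup ((fun y => inner ℝ y θ : EuclideanSpace ℝ (Fin n) → ℝ) '' metronoid μ) =
      (1 / 2) * ∫ x, |(inner ℝ x θ : ℝ)| ∂μ := by
  set g : EuclideanSpace ℝ (Fin n) → ℝ := fun x => inner ℝ x θ with hg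
  have hgmeas : Measurable g := measurable_id.inner measurable_const
  have hgint : Integrable g μ :=
    hmom.mono' hgmeas.aestronglyMeasurable
      (ae_of_all _ fun x => by simpa [hθ] using abs_real_inner_le_norm x θ)
  have hIpos : Integrable (fun x => max (g x) 0) μ := hgint.pos_part
  -- symmetry of scalar integrals
  have hmapint : ∀ h : ℝ → ℝ, Measurable h →
      ∫ x, h (g x) ∂μ = ∫ x, h (-g x) ∂μ := by
    intro h hh
    conv_lhs => rw [← hsymm]
    rw [integral_map (φ := fun x => -x) (f := fun t => h (g t)) measurable_neg.aemeasurable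
      (hh.comp hgmeas).aestronglyMeasurable]
    simp [hg, inner_neg_left]
  have key : ∫ x, max (g x) 0 ∂μ = ∫ x, max (-g x) 0 ∂μ :=
    hmapint (fun t => max t 0) (measurable_id.max measurable_const)
  have habs : ∫ x, |g x| ∂μ = 2 * ∫ x, max (g x) 0 ∂μ := by
    have h1 : (fun x => |g x|) = fun x => max (g x) 0 + max (-g x) 0 := by
      funext t
      rcases le_total 0 (g t) with h | h
      · simp [abs_of_nonneg h, max_eq_left h, max_eq_right (neg_nonpos.mpr h)]
      · simp [abs_of_nonpos h, max_eq_right h, max_eq_left (neg_nonneg.mpr h)]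
    have hI2 : Integrable (fun x => max (-g x) 0) μ := by
      simpa using hgint.neg.pos_part
    rw [h1, integral_add hIpos hI2, ← key]
    ring
  -- the positive halfspace
  set P : Set (EuclideanSpace ℝ (Fin n)) := {x | 0 < g x} with hPdef
  have hPmeas : MeasurableSet P := measurableSet_lt measurable_const hgmeas
  have hNmeas : MeasurableSet {x | g x < 0} := measurableSet_lt hgmeas measurable_const
  have hPlt : μ P = μ {x | g x < 0} := by
    conv_lhs => rw [← hsymm]
    rw [Measure.map_apply measurable_neg hPmeas]
    congr 1
    ext x
    simp [hPdef, hg, inner_neg_left]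
  have hdisj : Disjoint P {x | g x < 0} := by
    rw [Set.disjoint_left]
    intro x hx hx'
    have h1 : 0 < g x := hx
    have h2 : g x < 0 := hx'
    linarith
  have hP1 : μ P ≤ 1 := by
    have h2 : μ P + μ {x | g x < 0} ≤ 2 := by
      rw [← measure_union hdisj hNmeas]
      exact le_trans (measure_mono (Set.subset_univ _)) hmass
    rw [← hPlt] at h2
    have h3 : 2 * μ P ≤ 2 * 1 := by
      rw [two_mul, mul_one]; exact h2
    exact (ENNReal.mul_le_mul_iff_right (by norm_num) (by norm_num)).mp h3
  set a : ℝ := (μ P).toReal with hadef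
  set b : ℝ := (μ {(0 : EuclideanSpace ℝ (Fin n))}).toReal with hbdef
  have ha0 : 0 ≤ a := ENNReal.toReal_nonneg
  have ha1 : a ≤ 1 := by
    rw [hadef, ← ENNReal.toReal_one]
    exact ENNReal.toReal_mono (by norm_num) hP1
  have hb1 : 1 ≤ b := by
    rw [hbdef, ← ENNReal.toReal_one]
    exact ENNReal.toReal_mono (measure_ne_top μ _) hatom
  have hb0 : (0:ℝ) < b := lt_of_lt_of_le zero_lt_one hb1
  set c : ℝ := (1 - a) / b with hcdef
  have hc0 : 0 ≤ c := div_nonneg (by linarith) hb0.le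
  have hc1 : c ≤ 1 := (div_le_one hb0).mpr (by linarith)
  have h0P : (0 : EuclideanSpace ℝ (Fin n)) ∉ P := by
    simp [hPdef, hg]
  set f₀ : EuclideanSpace ℝ (Fin n) → ℝ :=
    fun x => P.indicator (fun _ => (1:ℝ)) x
      + ({(0 : EuclideanSpace ℝ (Fin n))} : Set _).indicator (fun _ => c) x with hf₀def
  have hf₀meas : Measurable f₀ :=
    (measurable_const.indicator hPmeas).add
      (measurable_const.indicator (measurableSet_singleton _))
  have hf₀range : ∀ x, f₀ x ∈ Set.Icc (0:ℝ) 1 := by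
    intro x
    by_cases hxP : x ∈ P
    · have hx0 : x ∉ ({(0 : EuclideanSpace ℝ (Fin n))} : Set _) := by
        intro h
        exact h0P (by rwa [Set.mem_singleton_iff.mp h] at hxP)
      simp [-Set.indicator_singleton, hf₀def, Set.indicator_of_mem hxP, Set.indicator_of_notMem hx0]
    · by_cases hx0 : x ∈ ({(0 : EuclideanSpace ℝ (Fin n))} : Set _)
      · simp [-Set.indicator_singleton, hf₀def, Set.indicator_of_notMem hxP, Set.indicator_of_mem hx0, hc0, hc1]
      · simp [-Set.indicator_singleton, hf₀def, Set.indicator_of_notMem hxP, Set.indicator_of_notMem hx0]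
  have hf₀mass : (∫ x, f₀ x ∂μ) = 1 := by
    rw [hf₀def]
    rw [integral_add ((integrable_const (1:ℝ)).indicator hPmeas)
      ((integrable_const c).indicator (measurableSet_singleton _))]
    rw [integral_indicator_const _ hPmeas, integral_indicator_const _ (measurableSet_singleton _)]
    have hbc : b * c = 1 - a := by
      rw [hcdef]; field_simp
    simp only [smul_eq_mul, mul_one]
    rw [measureReal_def, measureReal_def, ← hadef, ← hbdef, hbc]
    ring
  have hsmul_eq : (fun x => f₀ x • x) = P.indicator (fun x => x) := by
    funext x
    by_cases hxP : x ∈ P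
    · have hx0 : x ∉ ({(0 : EuclideanSpace ℝ (Fin n))} : Set _) := by
        intro h
        exact h0P (by rwa [Set.mem_singleton_iff.mp h] at hxP)
      simp [-Set.indicator_singleton, hf₀def, Set.indicator_of_mem hxP, Set.indicator_of_notMem hx0]
    · by_cases hx0 : x ∈ ({(0 : EuclideanSpace ℝ (Fin n))} : Set _)
      · rw [Set.mem_singleton_iff] at hx0
        simp [hf₀def, Set.indicator_of_notMem hxP, hx0, Set.indicator_of_notMem h0P]
      · simp [-Set.indicator_singleton, hf₀def, Set.indicator_of_notMem hxP, Set.indicator_of_notMem hx0]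
  have hidint : Integrable (fun x : EuclideanSpace ℝ (Fin n) => x) μ :=
    hmom.mono' aestronglyMeasurable_id (ae_of_all _ fun x => le_refl _)
  have hPind : ∀ x, max (g x) 0 = P.indicator g x := by
    intro x
    by_cases hxP : x ∈ P
    · rw [Set.indicator_of_mem hxP, max_eq_left (le_of_lt hxP)]
    · rw [Set.indicator_of_notMem hxP, max_eq_right (not_lt.mp hxP)]
  have hval : (inner ℝ (∫ x, f₀ x • x ∂μ) θ : ℝ) = ∫ x, max (g x) 0 ∂μ := by
    rw [hsmul_eq, integral_indicator hPmeas, real_inner_comm,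
      ← integral_inner (hidint.restrict) θ]
    rw [show (∫ x, max (g x) 0 ∂μ) = ∫ x, P.indicator g x ∂μ from
      integral_congr_ae (ae_of_all _ hPind), integral_indicator hPmeas]
    exact integral_congr_ae (ae_of_all _ fun x => (real_inner_comm θ x).symm)
  have hmem : (∫ x, max (g x) 0 ∂μ) ∈
      (fun y => (inner ℝ y θ : ℝ)) '' metronoid μ :=
    ⟨∫ x, f₀ x • x ∂μ, ⟨f₀, hf₀meas, hf₀range, hf₀mass, rfl⟩, hval⟩
  have hub : ∀ r ∈ (fun y => (inner ℝ y θ : ℝ)) '' metronoid μ,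
      r ≤ ∫ x, max (g x) 0 ∂μ := by
    rintro r ⟨y, ⟨f, hfm, hf01, hf1, rfl⟩, rfl⟩
    have hfn : ∀ x, ‖f x‖ ≤ 1 := by
      intro x
      have h01 := hf01 x
      rw [Real.norm_eq_abs, abs_le]
      exact ⟨by linarith [h01.1], h01.2⟩
    have hint : Integrable (fun x => f x • x) μ := by
      refine hmom.mono' (hfm.aestronglyMeasurable.smul aestronglyMeasurable_id)
        (ae_of_all _ fun x => ?_)
      rw [norm_smul]
      calc ‖f x‖ * ‖x‖ ≤ 1 * ‖x‖ := mul_le_mul_of_nonneg_right (hfn x) (norm_nonneg x)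
        _ = ‖x‖ := one_mul _
    have heq : (inner ℝ (∫ x, f x • x ∂μ) θ : ℝ) = ∫ x, f x * g x ∂μ := by
      rw [real_inner_comm, ← integral_inner hint θ]
      refine integral_congr_ae (ae_of_all _ fun x => ?_)
      show (inner ℝ θ (f x • x) : ℝ) = f x * g x
      rw [real_inner_smul_right]
      show f x * (inner ℝ θ x : ℝ) = f x * (inner ℝ x θ : ℝ)
      rw [real_inner_comm θ x]
    show (inner ℝ (∫ x, f x • x ∂μ) θ : ℝ) ≤ ∫ x, max (g x) 0 ∂μ
    rw [heq]
    refine integral_mono ?_ hIpos fun x => ?_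
    · refine hgint.abs.mono' (hfm.mul hgmeas).aestronglyMeasurable
        (ae_of_all _ fun x => ?_)
      rw [Real.norm_eq_abs, abs_mul]
      calc |f x| * |g x| ≤ 1 * |g x| := by
            refine mul_le_mul_of_nonneg_right ?_ (abs_nonneg _)
            simpa [Real.norm_eq_abs] using hfn x
        _ = |g x| := one_mul _
    · rcases le_or_gt (g x) 0 with h | h
      · have h1 : f x * g x ≤ 0 := by nlinarith [(hf01 x).1]
        exact h1.trans (le_max_right _ _)
      · have h1 : f x * g x ≤ g x := by nlinarith [(hf01 x).2]
        exact h1.trans (le_max_left _ _)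
  have hgoal : (∫ x, |(inner ℝ x θ : ℝ)| ∂μ) = ∫ x, |g x| ∂μ := rfl
  have hhalf : (1/2 : ℝ) * ∫ x, |g x| ∂μ = ∫ x, max (g x) 0 ∂μ := by
    rw [habs]; ring
  rw [hgoal, hhalf]
  exact le_antisymm (csSup_le ⟨_, hmem⟩ hub)
    (le_csSup ⟨_, fun r hr => hub r hr⟩ hmem)
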